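/- If a linear map A : V → W between vector spaces with nondegenerate symmetric bilinear forms of the same signature satisfies: A is injective, and for every v ∈ V with ⟨v,v⟩ ≠ 0 and every u with ⟨u,v⟩ = 0 one has ⟨Av,Au⟩ = 0, then A is a conformal linear map, i.e. there exists a nonzero constant c with ⟨Av,Au⟩ = c⟨v,u⟩ for all u,v ∈ V. -/

import Mathlib

/-- A linear map between spaces with nondegenerate symmetric bilinear forms of the same
signature (encoded by the existence of a linear equivalence identifying the two forms)
which is injective and sends, for every non-null `v`, all of `v^⊥` into `(Av)^⊥`
is a conformal linear map: `⟨Av,Au⟩ = c ⟨v,u⟩` for some nonzero constant `c`. -/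
theorem stmt3 {V W : Type*} [AddCommGroup V] [Module ℝ V] [AddCommGroup W] [Module ℝ W]
    [FiniteDimensional ℝ V] [FiniteDimensional ℝ W]
    (n : ℕ) (hn : 3 ≤ n)
    (hdimV : Module.finrank ℝ V = n) (hdimW : Module.finrank ℝ W = n)
    (B : LinearMap.BilinForm ℝ V) (C : LinearMap.BilinForm ℝ W)
    (hBsymm : ∀ x y, B x y = B y x) (hCsymm : ∀ x y, C x y = C y x)
    (hBnd : ∀ x, (∀ y, B x y = 0) → x = 0)
    (hCnd : ∀ x, (∀ y, C x y = 0) → x = 0)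
    -- same signature: the two forms are linearly isometric
    (e : V ≃ₗ[ℝ] W) (he : ∀ x y, C (e x) (e y) = B x y)
    (A : V →ₗ[ℝ] W) (hA : Function.Injective A)
    (hperp : ∀ v : V, B v v ≠ 0 → ∀ u : V, B u v = 0 → C (A v) (A u) = 0) :
    ∃ c : ℝ, c ≠ 0 ∧ ∀ u v : V, C (A v) (A u) = c * B v u := by
  classical
  set lam : V → ℝ := fun v => C (A v) (A v) / B v v with hlam
  -- key: for non-null v, C(Av)(Au) = lam v * B v u
  have key : ∀ v : V, B v v ≠ 0 → ∀ u : V, C (A v) (A u) = lam v * B v u := by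
    intro v hv u
    have h1 : B (u - (B u v / B v v) • v) v = 0 := by
      simp only [map_sub, map_smul, LinearMap.sub_apply, LinearMap.smul_apply, smul_eq_mul]
      field_simp
      ring
    have h2 := hperp v hv _ h1
    simp only [map_sub, map_smul, LinearMap.sub_apply, LinearMap.smul_apply, smul_eq_mul] at h2
    have hbs : B v u = B u v := hBsymm v u
    rw [hlam]
    field_simp at h2 ⊢
    rw [hbs]
    linarith [h2]
  have const1 : ∀ v w : V, B v v ≠ 0 → B w w ≠ 0 → B v w ≠ 0 → lam v = lam w := by
    intro v w hv hw hvw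
    have h1 := key v hv w
    have h2 := key w hw v
    have hc := hCsymm (A v) (A w)
    have hbs := hBsymm w v
    have : lam v * B v w = lam w * B v w := by
      rw [← h1, hc, h2, hbs]
    exact mul_right_cancel₀ hvw this
  have const : ∀ v w : V, B v v ≠ 0 → B w w ≠ 0 → lam v = lam w := by
    intro v w hv hw
    by_cases hvw : B v w = 0
    · have hwv : B w v = 0 := (hBsymm w v).trans hvw
      by_cases h1 : B (v + w) (v + w) = 0
      · -- B v v + B w w = 0, use z = v + 2w
        have hsum : B v v + B w w = 0 := by
          simp only [map_add, LinearMap.add_apply] at h1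
          linarith [hBsymm v w]
        set z := v + (2:ℝ) • w with hz
        have hzz : B z z ≠ 0 := by
          simp only [hz, map_add, map_smul, LinearMap.add_apply, LinearMap.smul_apply,
            smul_eq_mul]
          intro h
          apply hw
          have := hBsymm v w
          linarith
        have hvz : B v z ≠ 0 := by
          simp only [hz, map_add, map_smul, LinearMap.add_apply, LinearMap.smul_apply,
            smul_eq_mul]
          intro h
          apply hv
          linarith
        have hwz : B w z ≠ 0 := by
          simp only [hz, map_add, map_smul, LinearMap.add_apply, LinearMap.smul_apply,
            smul_eq_mul]
          intro h
          apply hw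
          linarith
        calc lam v = lam z := const1 v z hv hzz hvz
          _ = lam w := (const1 w z hw hzz hwz).symm
      · have hvz : B v (v + w) ≠ 0 := by
          simp only [map_add, LinearMap.add_apply]
          intro h; apply hv; linarith [hvw]
        have hwz : B w (v + w) ≠ 0 := by
          simp only [map_add, LinearMap.add_apply]
          intro h; apply hw; linarith [hwv]
        calc lam v = lam (v + w) := const1 v (v + w) hv h1 hvz
          _ = lam w := (const1 w (v + w) hw h1 hwz).symm
    · exact const1 v w hv hw hvw
  -- existence of a non-null vector
  have hex : ∃ v0 : V, B v0 v0 ≠ 0 := by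
    by_contra h
    push_neg at h
    have hB0 : ∀ x y : V, B x y = 0 := by
      intro x y
      have h1 := h (x + y)
      have h2 := h x
      have h3 := h y
      have hs := hBsymm x y
      simp only [map_add, LinearMap.add_apply] at h1
      linarith
    have : Nontrivial V := by
      rw [← Module.finrank_pos_iff (R := ℝ)]
      omega
    obtain ⟨x, hx0⟩ := exists_ne (0 : V)
    exact hx0 (hBnd x (hB0 x))
  obtain ⟨v0, hv0⟩ := hex
  -- full identity
  have full : ∀ u v : V, C (A v) (A u) = lam v0 * B v u := by
    intro u v
    by_cases hv : B v v = 0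
    · have hchoice : B (v + v0) (v + v0) ≠ 0 ∨ B (v - v0) (v - v0) ≠ 0 := by
        by_contra h
        push_neg at h
        obtain ⟨h1, h2⟩ := h
        simp only [map_add, map_sub, LinearMap.add_apply, LinearMap.sub_apply] at h1 h2
        apply hv0
        linarith
      rcases hchoice with h1 | h1
      · have k := key (v + v0) h1 u
        have k0 := key v0 hv0 u
        have hc : lam (v + v0) = lam v0 := const (v + v0) v0 h1 hv0
        simp only [map_add, LinearMap.add_apply] at k
        rw [hc] at k
        linarith [k, k0]
      · have k := key (v - v0) h1 u
        have k0 := key v0 hv0 u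
        have hc : lam (v - v0) = lam v0 := const (v - v0) v0 h1 hv0
        simp only [map_sub, LinearMap.sub_apply] at k
        rw [hc] at k
        linarith [k, k0]
    · rw [key v hv u, const v v0 hv hv0]
  refine ⟨lam v0, ?_, full⟩
  intro hc
  have hsurj : Function.Surjective A :=
    (LinearMap.injective_iff_surjective_of_finrank_eq_finrank (by rw [hdimV, hdimW])).mp hA
  have hAv0 : A v0 = 0 := by
    apply hCnd
    intro w
    obtain ⟨u, rfl⟩ := hsurj w
    rw [full u v0, hc, zero_mul]
  have : v0 = 0 := hA (by rw [hAv0, map_zero])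
  rw [this] at hv0
  simp at hv0
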